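/- Let R > 0, β ≥ 2, c₁ > 0, c₂ > 0, and let L₁, L₂ be independent random variables each uniformly distributed on [−R, R]. Define A = (|L₁|/c₁)^β and B = (|L₂|/c₂)^β. Then for every θ > 0, with t = θ^{−1/β}: P[A + B > 1/θ] ≥ 1 − min{t·c₁/R, 1}·min{t·c₂/R, 1}. -/

import Mathlib

open MeasureTheory Real

/-- The uniform probability measure on the interval `[-R, R]`. -/
noncomputable def unif (R : ℝ) : Measure ℝ :=
  (ENNReal.ofReal (2 * R))⁻¹ • (volume.restrict (Set.Icc (-R) R))

lemma unif_univ {R : ℝ} (hR : 0 < R) : unif R Set.univ = 1 := by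
  have h2R : (0:ℝ) < 2 * R := by linarith
  simp only [unif, Measure.smul_apply, Measure.restrict_apply MeasurableSet.univ,
    Set.univ_inter, Real.volume_Icc, smul_eq_mul]
  rw [show R - -R = 2 * R by ring, ENNReal.inv_mul_cancel]
  · exact (ENNReal.ofReal_pos.mpr h2R).ne'
  · exact ENNReal.ofReal_ne_top

lemma unif_Icc_le {R a : ℝ} (hR : 0 < R) :
    unif R (Set.Icc (-a) a) ≤ ENNReal.ofReal (min (a / R) 1) := by
  have h2R : (0:ℝ) < 2 * R := by linarith
  have hle1 : unif R (Set.Icc (-a) a) ≤ ENNReal.ofReal (a / R) := by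
    simp only [unif, Measure.smul_apply, smul_eq_mul]
    calc (ENNReal.ofReal (2 * R))⁻¹ * (volume.restrict (Set.Icc (-R) R)) (Set.Icc (-a) a)
        ≤ (ENNReal.ofReal (2 * R))⁻¹ * volume (Set.Icc (-a) a) := by
          gcongr; exact Measure.restrict_le_self
      _ = ENNReal.ofReal (a / R) := by
          rw [Real.volume_Icc, show a - -a = 2 * a by ring, mul_comm,
            ← div_eq_mul_inv, ← ENNReal.ofReal_div_of_pos h2R]
          congr 1
          field_simp
  have hle2 : unif R (Set.Icc (-a) a) ≤ 1 := by
    rw [← unif_univ hR]; exact measure_mono (Set.subset_univ _)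
  have hmin : ENNReal.ofReal (min (a / R) 1) = min (ENNReal.ofReal (a / R)) 1 := by
    rw [Monotone.map_min (fun _ _ h => ENNReal.ofReal_le_ofReal h), ENNReal.ofReal_one]
  rw [hmin]
  exact le_min hle1 hle2

/-- For independent `L₁, L₂ ~ Uniform[-R,R]`, `A = (|L₁|/c₁)^β`, `B = (|L₂|/c₂)^β`,
and any `θ > 0`, with `t = θ^{-1/β}`:
`P[A + B > 1/θ] ≥ 1 - min(t·c₁/R, 1)·min(t·c₂/R, 1)`. -/
theorem stmt_9 (R β c₁ c₂ θ : ℝ) (hR : 0 < R) (hβ : 2 ≤ β)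
    (hc₁ : 0 < c₁) (hc₂ : 0 < c₂) (hθ : 0 < θ) :
    ((unif R).prod (unif R))
        {p : ℝ × ℝ | 1 / θ < (|p.1| / c₁) ^ β + (|p.2| / c₂) ^ β} ≥
      1 - ENNReal.ofReal (min (θ ^ (-(1 / β)) * c₁ / R) 1) *
            ENNReal.ofReal (min (θ ^ (-(1 / β)) * c₂ / R) 1) := by
  set t : ℝ := θ ^ (-(1 / β)) with ht
  have hβ0 : (0:ℝ) < β := by linarith
  have htpos : 0 < t := Real.rpow_pos_of_pos hθ _
  have htβ : t ^ β = 1 / θ := by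
    rw [ht, ← Real.rpow_mul hθ.le, show (-(1 / β)) * β = -1 by field_simp,
      Real.rpow_neg_one, one_div]
  set μ := unif R with hμ
  have hprob : IsProbabilityMeasure μ := ⟨unif_univ hR⟩
  set E := {p : ℝ × ℝ | 1 / θ < (|p.1| / c₁) ^ β + (|p.2| / c₂) ^ β} with hE
  have hsub : Eᶜ ⊆ Set.Icc (-(t * c₁)) (t * c₁) ×ˢ Set.Icc (-(t * c₂)) (t * c₂) := by
    rintro ⟨x, y⟩ hp
    simp only [hE, Set.mem_compl_iff, Set.mem_setOf_eq, not_lt] at hp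
    have hA : (|x| / c₁) ^ β ≤ 1 / θ :=
      le_trans (le_add_of_nonneg_right (Real.rpow_nonneg (by positivity) _)) hp
    have hB : (|y| / c₂) ^ β ≤ 1 / θ :=
      le_trans (le_add_of_nonneg_left (Real.rpow_nonneg (by positivity) _)) hp
    rw [← htβ] at hA hB
    have h1 : |x| / c₁ ≤ t := (Real.rpow_le_rpow_iff (by positivity) htpos.le hβ0).mp hA
    have h2 : |y| / c₂ ≤ t := (Real.rpow_le_rpow_iff (by positivity) htpos.le hβ0).mp hB
    constructor
    · exact abs_le.mp ((div_le_iff₀ hc₁).mp h1)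
    · exact abs_le.mp ((div_le_iff₀ hc₂).mp h2)
  have hbound : μ.prod μ Eᶜ ≤
      ENNReal.ofReal (min (t * c₁ / R) 1) * ENNReal.ofReal (min (t * c₂ / R) 1) := by
    calc μ.prod μ Eᶜ
        ≤ μ.prod μ (Set.Icc (-(t * c₁)) (t * c₁) ×ˢ Set.Icc (-(t * c₂)) (t * c₂)) :=
          measure_mono hsub
      _ = μ (Set.Icc (-(t * c₁)) (t * c₁)) * μ (Set.Icc (-(t * c₂)) (t * c₂)) :=
          Measure.prod_prod _ _
      _ ≤ _ := mul_le_mul' (unif_Icc_le hR) (unif_Icc_le hR)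
  rw [ge_iff_le, tsub_le_iff_right]
  calc (1 : ENNReal) = μ.prod μ Set.univ := (measure_univ).symm
    _ = μ.prod μ (E ∪ Eᶜ) := by rw [Set.union_compl_self]
    _ ≤ μ.prod μ E + μ.prod μ Eᶜ := measure_union_le _ _
    _ ≤ μ.prod μ E + ENNReal.ofReal (min (t * c₁ / R) 1) * ENNReal.ofReal (min (t * c₂ / R) 1) :=
        add_le_add le_rfl hbound
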